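/- For every nonnegative integer n and fixed t in (0,1/2), the sequence (2n+1) B_{2n}(t)/B_{2n+1}(t) is increasing in n; for fixed t in (1/2,1), it is decreasing in n. -/

import Mathlib

open Set Real Filter MeasureTheory intervalIntegral

noncomputable def B (n : ℕ) (t : ℝ) : ℝ := Polynomial.aeval t (Polynomial.bernoulli n)

noncomputable def Bnum (n : ℕ) : ℝ := ((bernoulli n : ℚ) : ℝ)

namespace Stmt4


lemma hasDerivAt_B (k : ℕ) (t : ℝ) :
    HasDerivAt (fun x => B k x) ((k : ℝ) * B (k - 1) t) t := by
  have h := Polynomial.hasDerivAt_aeval (q := Polynomial.bernoulli k) t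
  have h2 : Polynomial.aeval t (Polynomial.derivative (Polynomial.bernoulli k))
      = (k : ℝ) * B (k - 1) t := by
    rw [Polynomial.derivative_bernoulli, map_mul, B]
    norm_num
  simpa [B, h2] using h

lemma differentiable_B (k : ℕ) : Differentiable ℝ (fun x => B k x) :=
  fun t => (hasDerivAt_B k t).differentiableAt

lemma continuous_B (k : ℕ) : Continuous (fun x => B k x) :=
  (differentiable_B k).continuous

lemma B_ratcast (k : ℕ) (q : ℚ) : B k (q : ℝ) = (((Polynomial.bernoulli k).eval q : ℚ) : ℝ) := by
  have h : ((q : ℚ) : ℝ) = algebraMap ℚ ℝ q := rfl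
  rw [B, h, Polynomial.aeval_algebraMap_apply_eq_algebraMap_eval]
  simp

lemma B_zero_eval (k : ℕ) : B k 0 = ((bernoulli k : ℚ) : ℝ) := by
  have := B_ratcast k 0
  simpa using this

lemma B_one_eval (k : ℕ) : B k 1 = ((bernoulli' k : ℚ) : ℝ) := by
  have := B_ratcast k 1
  simpa using this


lemma B_reflect (k : ℕ) (t : ℝ) : B k (1 - t) = (-1) ^ k * B k t := by
  induction k generalizing t with
  | zero =>
      simp [B, Polynomial.bernoulli_zero]
  | succ k ih =>
      set F : ℝ → ℝ := fun x => B (k+1) (1 - x) - (-1) ^ (k+1) * B (k+1) x with hF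
      have hderiv : ∀ x, HasDerivAt F 0 x := by
        intro x
        have h1 : HasDerivAt (fun y => B (k+1) (1 - y)) (-(((k:ℝ)+1) * B k (1 - x))) x := by
          have := (hasDerivAt_B (k+1) (1 - x)).comp x
            (((hasDerivAt_id x).const_sub 1))
          simp [Nat.add_sub_cancel] at this
          exact this
        have h2 : HasDerivAt (fun y => (-1:ℝ) ^ (k+1) * B (k+1) y)
            ((-1:ℝ) ^ (k+1) * (((k:ℝ)+1) * B k x)) x := by
          have := (hasDerivAt_B (k+1) x).const_mul ((-1:ℝ) ^ (k+1))
          simpa [Nat.add_sub_cancel] using this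
        have h3 := h1.sub h2
        have key : -(((k:ℝ)+1) * B k (1 - x)) - (-1:ℝ) ^ (k+1) * (((k:ℝ)+1) * B k x) = 0 := by
          rw [ih]
          ring
        rw [← key]
        exact h3
      have hconst : ∀ x, F x = F 0 := by
        intro x
        refine is_const_of_deriv_eq_zero ?_ ?_ x 0
        · intro x
          exact (hderiv x).differentiableAt
        · intro x
          exact (hderiv x).deriv
      have hF0 : F 0 = 0 := by
        have hb : ((bernoulli (k+1) : ℚ) : ℝ) = (-1:ℝ)^(k+1) * ((bernoulli' (k+1) : ℚ) : ℝ) := by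
          rw [bernoulli]
          push_cast
          ring
        have h2 : ((-1:ℝ) ^ (k+1)) * ((-1:ℝ) ^ (k+1)) = 1 := by
          rw [← pow_add, Even.neg_one_pow ⟨k+1, by ring⟩]
        simp only [hF, sub_zero, B_one_eval, B_zero_eval, hb]
        rw [← mul_assoc, h2, one_mul, sub_self]
      have := hconst t
      rw [hF0] at this
      have : B (k+1) (1 - t) - (-1)^(k+1) * B (k+1) t = 0 := this
      linarith [this]

lemma B_odd_half {k : ℕ} (hk : Odd k) : B k (1/2 : ℝ) = 0 := by
  have := B_reflect k (1/2)
  rw [hk.neg_one_pow] at this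
  norm_num at this
  linarith

lemma B_odd_zero {k : ℕ} (hk : Odd k) (h1 : 1 < k) : B k 0 = 0 := by
  rw [B_zero_eval, bernoulli_eq_bernoulli'_of_ne_one (by omega), bernoulli'_eq_zero_of_odd hk h1]
  simp


lemma bern_two : bernoulli 2 = 1/6 := by
  rw [bernoulli_eq_bernoulli'_of_ne_one (by norm_num), bernoulli'_two]

lemma bern_three : bernoulli 3 = 0 := by
  rw [bernoulli_eq_bernoulli'_of_ne_one (by norm_num), bernoulli'_three]

lemma B_zero (t : ℝ) : B 0 t = 1 := by simp [B]

lemma B_one (t : ℝ) : B 1 t = t - 1/2 := by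
  simp [B, Polynomial.bernoulli, Finset.sum_range_succ, Polynomial.aeval_monomial]
  ring

lemma B_two (t : ℝ) : B 2 t = t^2 - t + 1/6 := by
  simp [B, Polynomial.bernoulli, Finset.sum_range_succ, Polynomial.aeval_monomial, bern_two]
  ring

lemma B_three (t : ℝ) : B 3 t = t^3 - 3/2*t^2 + 1/2*t := by
  simp [B, Polynomial.bernoulli, Finset.sum_range_succ, Polynomial.aeval_monomial, bern_two,
    bern_three]
  norm_num
  ring


noncomputable def KK (f : ℝ → ℝ) (t : ℝ) : ℝ :=
  2*(1/2 - t) * (∫ w in (0:ℝ)..t, w * f w) + 2*t * (∫ w in t..(1/2:ℝ), (1/2 - w) * f w)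

noncomputable def KD (f : ℝ → ℝ) (t : ℝ) : ℝ :=
  (-2) * (∫ w in (0:ℝ)..t, w * f w) + 2 * (∫ w in t..(1/2:ℝ), (1/2 - w) * f w)

variable {f : ℝ → ℝ} (hf : Continuous f)

lemma hasDerivAt_int1 (hf : Continuous f) (t : ℝ) :
    HasDerivAt (fun u => ∫ w in (0:ℝ)..u, w * f w) (t * f t) t := by
  have hc : Continuous (fun w => w * f w) := continuous_id.mul hf
  exact integral_hasDerivAt_right (hc.intervalIntegrable _ _)
    hc.stronglyMeasurable.stronglyMeasurableAtFilter hc.continuousAt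

lemma hasDerivAt_int2 (hf : Continuous f) (t : ℝ) :
    HasDerivAt (fun u => ∫ w in u..(1/2:ℝ), (1/2 - w) * f w) (-((1/2 - t) * f t)) t := by
  have hc : Continuous (fun w => (1/2 - w) * f w) := (by continuity : Continuous fun w : ℝ => (1/2 - w)).mul hf
  have h := integral_hasDerivAt_right (hc.intervalIntegrable (1/2 : ℝ) t)
    hc.stronglyMeasurable.stronglyMeasurableAtFilter hc.continuousAt
  have heq : (fun u => ∫ w in u..(1/2:ℝ), (1/2 - w) * f w)
      = fun u => -(∫ w in (1/2:ℝ)..u, (1/2 - w) * f w) := by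
    funext u
    rw [intervalIntegral.integral_symm]
  rw [heq]
  exact h.neg

lemma hasDerivAt_KK (hf : Continuous f) (t : ℝ) : HasDerivAt (KK f) (KD f t) t := by
  have h1 := ((hasDerivAt_int1 hf t).const_mul (2*(1/2 - t))).add
    (((hasDerivAt_int1 hf t)).const_mul 0)
  -- product rule: (2*(1/2-t)) * A(t): use HasDerivAt.mul with u = fun t => 2*(1/2-t)
  have hu : HasDerivAt (fun u : ℝ => 2*(1/2 - u)) (-2) t := by
    simpa using ((hasDerivAt_id t).const_sub (1/2:ℝ)).const_mul 2
  have hv : HasDerivAt (fun u : ℝ => 2*u) 2 t := by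
    simpa using (hasDerivAt_id t).const_mul 2
  have hA := hu.mul (hasDerivAt_int1 hf t)
  have hB := hv.mul (hasDerivAt_int2 hf t)
  have h := hA.add hB
  have : (-2) * (∫ w in (0:ℝ)..t, w * f w) + 2*(1/2 - t) * (t * f t)
      + (2 * (∫ w in t..(1/2:ℝ), (1/2 - w) * f w) + 2*t * (-((1/2 - t) * f t))) = KD f t := by
    rw [KD]; ring
  rw [← this]
  exact h

lemma hasDerivAt_KD (hf : Continuous f) (t : ℝ) : HasDerivAt (KD f) (-(f t)) t := by
  have hA := (hasDerivAt_int1 hf t).const_mul (-2 : ℝ)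
  have hB := (hasDerivAt_int2 hf t).const_mul (2 : ℝ)
  have h := hA.add hB
  have : (-2 : ℝ) * (t * f t) + 2 * (-((1/2 - t) * f t)) = -(f t) := by ring
  rw [← this]
  exact h

lemma KK_zero : KK f 0 = 0 := by simp [KK]

lemma KK_half : KK f (1/2 : ℝ) = 0 := by simp [KK]


noncomputable def phi (n : ℕ) (t : ℝ) : ℝ := (-1)^(n+1) * B (2*n+1) t

noncomputable def phid (n : ℕ) (t : ℝ) : ℝ := (-1)^(n+1) * (2*(n:ℝ)+1) * B (2*n) t

noncomputable def cc (n : ℕ) : ℝ := (2*(n:ℝ)+3) * (2*(n:ℝ)+2)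

lemma cc_pos (n : ℕ) : 0 < cc n := by
  have : (0:ℝ) ≤ (n:ℝ) := Nat.cast_nonneg n
  rw [cc]; nlinarith

lemma continuous_phi (n : ℕ) : Continuous (phi n) := continuous_const.mul (continuous_B _)

lemma hasDerivAt_phi (n : ℕ) (t : ℝ) : HasDerivAt (phi n) (phid n t) t := by
  have h := (hasDerivAt_B (2*n+1) t).const_mul ((-1:ℝ)^(n+1))
  have e1 : 2*n+1-1 = 2*n := by omega
  rw [e1] at h
  have e2 : (-1:ℝ)^(n+1) * (((2*n+1 : ℕ) : ℝ) * B (2*n) t) = (-1)^(n+1) * (2*(n:ℝ)+1) * B (2*n) t := by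
    push_cast; ring
  rw [e2] at h
  exact h

lemma hasDerivAt_phid_succ (n : ℕ) (t : ℝ) :
    HasDerivAt (phid (n+1)) (-(cc n * phi n t)) t := by
  have h := ((hasDerivAt_B (2*(n+1)) t).const_mul ((-1:ℝ)^(n+1+1) * (2*((n:ℝ)+1)+1)))
  have e1 : 2*(n+1)-1 = 2*n+1 := by omega
  rw [e1] at h
  have e2 : (-1:ℝ)^(n+1+1) * (2*((n:ℝ)+1)+1) * (((2*(n+1) : ℕ) : ℝ) * B (2*n+1) t)
      = -(cc n * phi n t) := by
    rw [cc, phi]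
    push_cast
    ring
  rw [e2] at h
  have : phid (n+1) = fun x => (-1:ℝ)^(n+1+1) * (2*((n:ℝ)+1)+1) * B (2*(n+1)) x := by
    funext x; rw [phid]; push_cast; ring
  rw [this]
  exact h

lemma phi_half (n : ℕ) : phi n (1/2 : ℝ) = 0 := by
  rw [phi, B_odd_half ⟨n, by omega⟩, mul_zero]

lemma phi_succ_zero (n : ℕ) : phi (n+1) 0 = 0 := by
  rw [phi, B_odd_zero ⟨n+1, by omega⟩ (by omega), mul_zero]

lemma rep (n : ℕ) (t : ℝ) :
    phi (n+1) t = cc n * KK (phi n) t ∧ phid (n+1) t = cc n * KD (phi n) t := by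
  set F : ℝ → ℝ := fun x => phi (n+1) x - cc n * KK (phi n) x with hFdef
  set D : ℝ → ℝ := fun x => phid (n+1) x - cc n * KD (phi n) x with hDdef
  have hf := continuous_phi n
  have hD : ∀ x, HasDerivAt D 0 x := by
    intro x
    have h := (hasDerivAt_phid_succ n x).sub ((hasDerivAt_KD hf x).const_mul (cc n))
    simp at h
    exact h
  have hDconst : ∀ x, D x = D 0 := fun x =>
    is_const_of_deriv_eq_zero (fun y => (hD y).differentiableAt) (fun y => (hD y).deriv) x 0
  have hF : ∀ x, HasDerivAt F (D 0) x := by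
    intro x
    have h := (hasDerivAt_phi (n+1) x).sub ((hasDerivAt_KK hf x).const_mul (cc n))
    rw [← hDconst x]
    exact h
  have hlin : ∀ x, F x = F 0 + D 0 * x := by
    intro x
    have hG : ∀ y, HasDerivAt (fun z => F z - D 0 * z) 0 y := by
      intro y
      have h := (hF y).sub ((hasDerivAt_id y).const_mul (D 0))
      simp at h
      exact h
    have := is_const_of_deriv_eq_zero (fun y => (hG y).differentiableAt)
      (fun y => (hG y).deriv) x 0
    simp only [mul_zero, sub_zero] at this
    linarith [this]
  have hF0 : F 0 = 0 := by simp [hFdef, phi_succ_zero, KK_zero]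
  have hFhalf : F (1/2 : ℝ) = 0 := by
    show phi (n+1) (1/2) - cc n * KK (phi n) (1/2) = 0
    rw [phi_half, KK_half, mul_zero, sub_zero]
  have hD0 : D 0 = 0 := by
    have h := hlin (1/2 : ℝ)
    rw [hFhalf, hF0] at h
    norm_num at h
    linarith
  constructor
  · have := hlin t
    rw [hF0, hD0] at this
    simp only [hFdef] at this
    linarith
  · have := hDconst t
    rw [hD0] at this
    simp only [hDdef] at this
    linarith


noncomputable def G2 (t w : ℝ) : ℝ := 2 * min t w * (1/2 - max t w)
noncomputable def g2 (t w : ℝ) : ℝ := if w < t then -2*w else 1 - 2*w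

lemma continuous_G2 (t : ℝ) : Continuous (fun w => G2 t w) := by
  exact (continuous_const.mul (continuous_const.min continuous_id)).mul
    (continuous_const.sub (continuous_const.max continuous_id))

variable {f : ℝ → ℝ}

lemma KK_eq_int (hf : Continuous f) {t : ℝ} (ht : t ∈ Icc (0:ℝ) (1/2)) :
    KK f t = ∫ w in Ioo (0:ℝ) (1/2), G2 t w * f w := by
  obtain ⟨ht0, ht1⟩ := ht
  have hc : Continuous (fun w => G2 t w * f w) := (continuous_G2 t).mul hf
  have h0 : (∫ w in Ioo (0:ℝ) (1/2), G2 t w * f w)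
      = ∫ w in (0:ℝ)..(1/2:ℝ), G2 t w * f w := by
    rw [intervalIntegral.integral_of_le (by norm_num), integral_Ioc_eq_integral_Ioo]
  rw [h0, ← intervalIntegral.integral_add_adjacent_intervals
    (hc.intervalIntegrable 0 t) (hc.intervalIntegrable t (1/2))]
  have e1 : (∫ w in (0:ℝ)..t, G2 t w * f w) = 2*(1/2 - t) * ∫ w in (0:ℝ)..t, w * f w := by
    rw [← intervalIntegral.integral_const_mul]
    apply intervalIntegral.integral_congr
    intro w hw
    rw [uIcc_of_le ht0] at hw
    obtain ⟨hw0, hwt⟩ := hw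
    simp only [G2]
    rw [min_eq_right hwt, max_eq_left hwt]
    ring
  have e2 : (∫ w in t..(1/2:ℝ), G2 t w * f w) = 2*t * ∫ w in t..(1/2:ℝ), (1/2 - w) * f w := by
    rw [← intervalIntegral.integral_const_mul]
    apply intervalIntegral.integral_congr
    intro w hw
    rw [uIcc_of_le ht1] at hw
    obtain ⟨hwt, hw1⟩ := hw
    simp only [G2]
    rw [min_eq_left hwt, max_eq_right hwt]
    ring
  rw [e1, e2, KK]

lemma KD_eq_int (hf : Continuous f) {t : ℝ} (ht : t ∈ Icc (0:ℝ) (1/2)) :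
    KD f t = ∫ w in Ioo (0:ℝ) (1/2), g2 t w * f w := by
  obtain ⟨ht0, ht1⟩ := ht
  have hae : ∀ᵐ (w : ℝ) ∂(volume : Measure ℝ), w ≠ t := by
    rw [MeasureTheory.ae_iff]
    simp only [ne_eq, not_not, setOf_eq_eq_singleton]
    exact Real.volume_singleton
  have hint : IntervalIntegrable (fun w => g2 t w * f w) volume 0 t ∧
      IntervalIntegrable (fun w => g2 t w * f w) volume t (1/2) := by
    have heq : (fun w => g2 t w * f w)
        = fun w => (1 - 2*w) * f w - (Iio t).indicator f w := by
      funext w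
      by_cases h : w < t
      · simp [g2, h, Set.indicator_of_mem (mem_Iio.mpr h)]
        ring
      · simp [g2, h, Set.indicator_of_notMem (fun hh => h (mem_Iio.mp hh))]
    have hc : Continuous fun w : ℝ => (1 - 2*w) * f w := by
      exact (continuous_const.sub (continuous_const.mul continuous_id)).mul hf
    constructor <;>
    · rw [heq]
      apply IntervalIntegrable.sub (hc.intervalIntegrable _ _)
      rw [intervalIntegrable_iff]
      exact ((intervalIntegrable_iff.mp (hf.intervalIntegrable _ _)).indicator
        measurableSet_Iio)
  have h0 : (∫ w in Ioo (0:ℝ) (1/2), g2 t w * f w)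
      = ∫ w in (0:ℝ)..(1/2:ℝ), g2 t w * f w := by
    rw [intervalIntegral.integral_of_le (by norm_num), integral_Ioc_eq_integral_Ioo]
  rw [h0, ← intervalIntegral.integral_add_adjacent_intervals hint.1 hint.2]
  have e1 : (∫ w in (0:ℝ)..t, g2 t w * f w) = (-2) * ∫ w in (0:ℝ)..t, w * f w := by
    rw [← intervalIntegral.integral_const_mul]
    apply intervalIntegral.integral_congr_ae
    filter_upwards [hae] with w hw hmem
    rw [uIoc_of_le ht0] at hmem
    have : w < t := lt_of_le_of_ne hmem.2 hw
    simp only [g2]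
    rw [if_pos this]
    ring
  have e2 : (∫ w in t..(1/2:ℝ), g2 t w * f w) = 2 * ∫ w in t..(1/2:ℝ), (1/2 - w) * f w := by
    rw [← intervalIntegral.integral_const_mul]
    apply intervalIntegral.integral_congr_ae
    filter_upwards with w hmem
    rw [uIoc_of_le ht1] at hmem
    have : ¬ (w < t) := not_lt.mpr hmem.1.le
    simp only [g2]
    rw [if_neg this]
    ring
  rw [e1, e2, KD]


lemma aux_prod {a b c : ℝ} (hb : 0 ≤ b) (hc : 0 ≤ c) (hab : b ≤ a) (hac : c ≤ a) :
    b * c ≤ a * min b c := by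
  rcases le_total b c with h | h
  · rw [min_eq_left h]; nlinarith
  · rw [min_eq_right h]; nlinarith

lemma G2_tp {u v w w' : ℝ} (hv : v ∈ Icc (0:ℝ) (1/2)) (hu : u ∈ Icc (0:ℝ) (1/2))
    (hw : w ∈ Icc (0:ℝ) (1/2)) (hw' : w' ∈ Icc (0:ℝ) (1/2))
    (hvu : v ≤ u) (hww : w' ≤ w) :
    G2 v w * G2 u w' ≤ G2 u w * G2 v w' := by
  have hm2 : min v w' = min (min v w) (min u w') := by
    rw [min_min_min_comm, min_eq_left hvu, min_eq_right hww]
  have hM1 : max u w = max (max v w) (max u w') := by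
    rw [max_max_max_comm, max_eq_right hvu, max_eq_left hww]
  have c1 : min v w * min u w' ≤ min u w * min v w' := by
    rw [hm2]
    exact aux_prod (le_min hv.1 hw.1) (le_min hu.1 hw'.1)
      (min_le_min hvu le_rfl) (min_le_min le_rfl hww)
  have c2 : (1/2 - max v w) * (1/2 - max u w') ≤ (1/2 - max v w') * (1/2 - max u w) := by
    have e : min (1/2 - max v w) (1/2 - max u w') = 1/2 - max u w := by
      rw [min_sub_sub_left, ← hM1]
    rw [← e]
    exact aux_prod (by simp only [sub_nonneg, max_le_iff]; exact ⟨hv.2, hw.2⟩)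
      (by simp only [sub_nonneg, max_le_iff]; exact ⟨hu.2, hw'.2⟩)
      (sub_le_sub_left (max_le_max le_rfl hww) _)
      (sub_le_sub_left (max_le_max hvu le_rfl) _)
  have hnn1 : 0 ≤ min v w * min u w' :=
    mul_nonneg (le_min hv.1 hw.1) (le_min hu.1 hw'.1)
  have hnn2 : 0 ≤ (1/2 - max v w') * (1/2 - max u w) :=
    mul_nonneg (by simp only [sub_nonneg, max_le_iff]; exact ⟨hv.2, hw'.2⟩)
      (by simp only [sub_nonneg, max_le_iff]; exact ⟨hu.2, hw.2⟩)
  have := mul_le_mul c1 c2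
    (mul_nonneg (by simp only [sub_nonneg, max_le_iff]; exact ⟨hv.2, hw.2⟩)
      (by simp only [sub_nonneg, max_le_iff]; exact ⟨hu.2, hw'.2⟩))
    (le_trans hnn1 c1)
  simp only [G2]
  nlinarith [this]

lemma G2_tp_strict {u v w w' : ℝ} (h0 : 0 < w') (h1 : w' < v) (h2 : v < u) (h3 : u < w)
    (h4 : w < 1/2) : G2 v w * G2 u w' < G2 u w * G2 v w' := by
  have e1 : G2 v w = 2 * v * (1/2 - w) := by
    simp only [G2]; rw [min_eq_left (by linarith), max_eq_right (by linarith)]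
  have e2 : G2 u w' = 2 * w' * (1/2 - u) := by
    simp only [G2]; rw [min_eq_right (by linarith), max_eq_left (by linarith)]
  have e3 : G2 u w = 2 * u * (1/2 - w) := by
    simp only [G2]; rw [min_eq_left (by linarith), max_eq_right (by linarith)]
  have e4 : G2 v w' = 2 * w' * (1/2 - v) := by
    simp only [G2]; rw [min_eq_right (by linarith), max_eq_left (by linarith)]
  rw [e1, e2, e3, e4]
  nlinarith [mul_pos (mul_pos h0 (by linarith : (0:ℝ) < 1/2 - w)) (by linarith : (0:ℝ) < u - v)]

lemma g2_tp {t w w' : ℝ} (ht : t ∈ Ioo (0:ℝ) (1/2)) (hw : w ∈ Ioo (0:ℝ) (1/2))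
    (hw' : w' ∈ Ioo (0:ℝ) (1/2)) (hww : w' ≤ w) :
    g2 t w' * G2 t w ≤ g2 t w * G2 t w' := by
  obtain ⟨ht0, ht1⟩ := ht; obtain ⟨hwa, hwb⟩ := hw; obtain ⟨hwa', hwb'⟩ := hw'
  simp only [g2, G2, min_def, max_def]
  split_ifs <;> nlinarith

lemma g2_tp_strict {t w w' : ℝ} (h0 : 0 < w') (h1 : w' < t) (h2 : t < w) (h3 : w < 1/2) :
    g2 t w' * G2 t w < g2 t w * G2 t w' := by
  have e1 : g2 t w' = -2*w' := by simp only [g2]; rw [if_pos h1]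
  have e2 : g2 t w = 1 - 2*w := by simp only [g2]; rw [if_neg (not_lt.mpr h2.le)]
  have e3 : G2 t w = 2 * t * (1/2 - w) := by
    simp only [G2]; rw [min_eq_left h2.le, max_eq_right h2.le]
  have e4 : G2 t w' = 2 * w' * (1/2 - t) := by
    simp only [G2]; rw [min_eq_right h1.le, max_eq_left h1.le]
  rw [e1, e2, e3, e4]
  nlinarith [mul_pos h0 (by linarith : (0:ℝ) < 1/2 - w)]


local notation "II" => Ioo (0:ℝ) (1/2)

noncomputable def muI : Measure ℝ := volume.restrict (Ioo (0:ℝ) (1/2))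

instance : SFinite muI := by unfold muI; infer_instance

instance : IsFiniteMeasure muI := by
  unfold muI
  constructor
  rw [Measure.restrict_apply_univ, Real.volume_Ioo]
  simp

lemma pair_pos {a b p q : ℝ → ℝ}
    (hap : Integrable (fun w => a w * p w) muI) (haq : Integrable (fun w => a w * q w) muI)
    (hbp : Integrable (fun w => b w * p w) muI) (hbq : Integrable (fun w => b w * q w) muI)
    (hnn : ∀ w ∈ II, ∀ w' ∈ II,
      0 ≤ (a w * b w' - a w' * b w) * (p w * q w' - p w' * q w))
    {α β γ δ : ℝ} (hsub1 : Ioo α β ⊆ II) (hsub2 : Ioo γ δ ⊆ II) (hαβ : α < β) (hγδ : γ < δ)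
    (hpos : ∀ w ∈ Ioo α β, ∀ w' ∈ Ioo γ δ,
      0 < (a w * b w' - a w' * b w) * (p w * q w' - p w' * q w)) :
    0 < (∫ w, a w * p w ∂muI) * (∫ w, b w * q w ∂muI)
        - (∫ w, a w * q w ∂muI) * (∫ w, b w * p w ∂muI) := by
  set P : Measure (ℝ × ℝ) := muI.prod muI with hP
  set Φ : ℝ × ℝ → ℝ := fun z =>
    (a z.1 * b z.2 - a z.2 * b z.1) * (p z.1 * q z.2 - p z.2 * q z.1) with hΦ
  have hint1 : Integrable (fun z : ℝ × ℝ => (a z.1 * p z.1) * (b z.2 * q z.2)) P :=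
    hap.mul_prod hbq
  have hint2 : Integrable (fun z : ℝ × ℝ => (a z.1 * q z.1) * (b z.2 * p z.2)) P :=
    haq.mul_prod hbp
  have hint3 : Integrable (fun z : ℝ × ℝ => (b z.1 * p z.1) * (a z.2 * q z.2)) P :=
    hbp.mul_prod haq
  have hint4 : Integrable (fun z : ℝ × ℝ => (b z.1 * q z.1) * (a z.2 * p z.2)) P :=
    hbq.mul_prod hap
  have hΦeq : Φ = fun z : ℝ × ℝ =>
      ((a z.1 * p z.1) * (b z.2 * q z.2) - (a z.1 * q z.1) * (b z.2 * p z.2))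
      - ((b z.1 * p z.1) * (a z.2 * q z.2) - (b z.1 * q z.1) * (a z.2 * p z.2)) := by
    funext z; simp only [hΦ]; ring
  have hΦint : Integrable Φ P := by
    rw [hΦeq]
    exact (hint1.sub hint2).sub (hint3.sub hint4)
  have hΦval : ∫ z, Φ z ∂P
      = 2 * ((∫ w, a w * p w ∂muI) * (∫ w, b w * q w ∂muI)
        - (∫ w, a w * q w ∂muI) * (∫ w, b w * p w ∂muI)) := by
    have e0 : ∫ z, Φ z ∂P = ∫ z : ℝ × ℝ,
        ((a z.1 * p z.1) * (b z.2 * q z.2) - (a z.1 * q z.1) * (b z.2 * p z.2)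
        - ((b z.1 * p z.1) * (a z.2 * q z.2) - (b z.1 * q z.1) * (a z.2 * p z.2))) ∂P := by
      apply MeasureTheory.integral_congr_ae
      filter_upwards with z
      simp only [hΦ]
      ring
    have h12 : Integrable (fun z : ℝ × ℝ =>
        (a z.1 * p z.1) * (b z.2 * q z.2) - (a z.1 * q z.1) * (b z.2 * p z.2)) P :=
      hint1.sub hint2
    have h34 : Integrable (fun z : ℝ × ℝ =>
        (b z.1 * p z.1) * (a z.2 * q z.2) - (b z.1 * q z.1) * (a z.2 * p z.2)) P :=
      hint3.sub hint4
    rw [e0, integral_sub h12 h34, integral_sub hint1 hint2,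
      integral_sub hint3 hint4, hP,
      MeasureTheory.integral_prod_mul (f := fun w => a w * p w) (g := fun w => b w * q w),
      MeasureTheory.integral_prod_mul (f := fun w => a w * q w) (g := fun w => b w * p w),
      MeasureTheory.integral_prod_mul (f := fun w => b w * p w) (g := fun w => a w * q w),
      MeasureTheory.integral_prod_mul (f := fun w => b w * q w) (g := fun w => a w * p w)]
    ring
  have hPrestrict : P = (volume.prod volume).restrict (II ×ˢ II) := by
    rw [hP, muI, Measure.prod_restrict]
  have haemem : ∀ᵐ z ∂P, z ∈ II ×ˢ II := by
    rw [hPrestrict]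
    exact ae_restrict_mem (measurableSet_Ioo.prod measurableSet_Ioo)
  have hΦnn : 0 ≤ᵐ[P] Φ := by
    filter_upwards [haemem] with z hz
    exact hnn z.1 hz.1 z.2 hz.2
  have hΦpos : 0 < ∫ z, Φ z ∂P := by
    rcases lt_or_ge 0 (∫ z, Φ z ∂P) with h | h
    · exact h
    · exfalso
      have hzero : ∫ z, Φ z ∂P = 0 :=
        le_antisymm h (integral_nonneg_of_ae hΦnn)
      rw [integral_eq_zero_iff_of_nonneg_ae hΦnn hΦint] at hzero
      have hR : P (Ioo α β ×ˢ Ioo γ δ) > 0 := by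
        rw [hP, Measure.prod_prod, muI, Measure.restrict_apply measurableSet_Ioo,
          Measure.restrict_apply measurableSet_Ioo,
          inter_eq_self_of_subset_left hsub1, inter_eq_self_of_subset_left hsub2,
          Real.volume_Ioo, Real.volume_Ioo]
        exact ENNReal.mul_pos (by simp [hαβ]) (by simp [hγδ])
      have hsubset : (Ioo α β ×ˢ Ioo γ δ) ⊆ {z | Φ z ≠ 0} := by
        intro z hz
        exact (hpos z.1 hz.1 z.2 hz.2).ne'
      have : P (Ioo α β ×ˢ Ioo γ δ) = 0 := by
        apply measure_mono_null hsubset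
        have := hzero
        rw [Filter.EventuallyEq] at this
        rw [ae_iff] at this
        simpa using this
      rw [this] at hR
      exact lt_irrefl 0 hR
  rw [hΦval] at hΦpos
  linarith

-- axioms from previous parts

-- begin p9
lemma phi_zero_eq (t : ℝ) : phi 0 t = 1/2 - t := by
  rw [phi]
  simp only [Nat.zero_eq, mul_zero, zero_add, pow_one]
  rw [B_one]
  ring

lemma phi_one_eq (t : ℝ) : phi 1 t = t^3 - 3/2*t^2 + 1/2*t := by
  rw [phi]
  norm_num
  rw [B_three]

lemma int_G2_mul (t : ℝ) (f : ℝ → ℝ) (hf : Continuous f) :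
    Integrable (fun w => G2 t w * f w) muI := by
  have hc : Continuous fun w => G2 t w * f w := (continuous_G2 t).mul hf
  exact (hc.integrableOn_Icc (a := 0) (b := 1/2)).mono_set Ioo_subset_Icc_self

lemma int_g2_mul (t : ℝ) (f : ℝ → ℝ) (hf : Continuous f) :
    Integrable (fun w => g2 t w * f w) muI := by
  have heq : (fun w => g2 t w * f w)
      = fun w => (1 - 2*w) * f w - (Iio t).indicator f w := by
    funext w
    by_cases h : w < t
    · simp [g2, h, Set.indicator_of_mem (mem_Iio.mpr h)]
      ring
    · simp [g2, h, Set.indicator_of_notMem (fun hh => h (mem_Iio.mp hh))]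
  rw [heq]
  have hc : Continuous fun w : ℝ => (1 - 2*w) * f w :=
    (continuous_const.sub (continuous_const.mul continuous_id)).mul hf
  exact ((hc.integrableOn_Icc (a := 0) (b := 1/2)).mono_set Ioo_subset_Icc_self).sub
    (((hf.integrableOn_Icc (a := 0) (b := 1/2)).mono_set Ioo_subset_Icc_self).indicator
      measurableSet_Iio)

lemma KK_pos {f : ℝ → ℝ} (hf : Continuous f) (hpos : ∀ w ∈ Ioo (0:ℝ) (1/2), 0 < f w)
    {t : ℝ} (ht : t ∈ Ioo (0:ℝ) (1/2)) : 0 < KK f t := by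
  obtain ⟨ht0, ht1⟩ := ht
  have hc1 : Continuous fun w : ℝ => w * f w := continuous_id.mul hf
  have hc2 : Continuous fun w : ℝ => (1/2 - w) * f w :=
    (continuous_const.sub continuous_id).mul hf
  have h1 : 0 < ∫ w in (0:ℝ)..t, w * f w := by
    apply intervalIntegral_pos_of_pos_on (hc1.intervalIntegrable _ _)
    · intro w hw
      exact mul_pos hw.1 (hpos w ⟨hw.1, lt_trans hw.2 ht1⟩)
    · exact ht0
  have h2 : 0 < ∫ w in t..(1/2:ℝ), (1/2 - w) * f w := by
    apply intervalIntegral_pos_of_pos_on (hc2.intervalIntegrable _ _)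
    · intro w hw
      exact mul_pos (by linarith [hw.2]) (hpos w ⟨lt_trans ht0 hw.1, hw.2⟩)
    · exact ht1
  rw [KK]
  have : 0 < 2*(1/2 - t) := by linarith
  positivity

def Pn (n : ℕ) : Prop :=
  (∀ t ∈ Ioo (0:ℝ) (1/2), 0 < phi n t) ∧
  (∀ v ∈ Ioo (0:ℝ) (1/2), ∀ u ∈ Ioo (0:ℝ) (1/2), v < u →
    phi (n+1) v * phi n u < phi (n+1) u * phi n v)

lemma Pn_all : ∀ n, Pn n := by
  have hpos_succ : ∀ n, (∀ t ∈ Ioo (0:ℝ) (1/2), 0 < phi n t) →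
      (∀ t ∈ Ioo (0:ℝ) (1/2), 0 < phi (n+1) t) := by
    intro n hpos t ht
    rw [(rep n t).1]
    exact mul_pos (cc_pos n) (KK_pos (continuous_phi n) hpos ht)
  intro n
  induction n with
  | zero =>
      constructor
      · intro t ht
        rw [phi_zero_eq]
        simp only [mem_Ioo] at ht
        linarith [ht.2]
      · intro v hv u hu hvu
        simp only [mem_Ioo] at hv hu
        rw [phi_one_eq, phi_one_eq, phi_zero_eq, phi_zero_eq]
        nlinarith [mul_pos (mul_pos (mul_pos (by linarith : (0:ℝ) < 1/2 - u)
          (by linarith : (0:ℝ) < 1/2 - v)) (by linarith : (0:ℝ) < u - v))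
          (by linarith : (0:ℝ) < 1 - u - v)]
  | succ n ih =>
      obtain ⟨ihpos, ih2⟩ := ih
      have hpos1 : ∀ t ∈ Ioo (0:ℝ) (1/2), 0 < phi (n+1) t := hpos_succ n ihpos
      refine ⟨hpos1, ?_⟩
      intro v hv u hu hvu
      -- representations
      have hIcc : ∀ {x : ℝ}, x ∈ Ioo (0:ℝ) (1/2) → x ∈ Icc (0:ℝ) (1/2) :=
        fun hx => Ioo_subset_Icc_self hx
      have repu : phi (n+2) u = cc (n+1) * ∫ w, G2 u w * phi (n+1) w ∂muI := by
        rw [(rep (n+1) u).1, KK_eq_int (continuous_phi (n+1)) (hIcc hu)]; rfl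
      have repv : phi (n+2) v = cc (n+1) * ∫ w, G2 v w * phi (n+1) w ∂muI := by
        rw [(rep (n+1) v).1, KK_eq_int (continuous_phi (n+1)) (hIcc hv)]; rfl
      have repu' : phi (n+1) u = cc n * ∫ w, G2 u w * phi n w ∂muI := by
        rw [(rep n u).1, KK_eq_int (continuous_phi n) (hIcc hu)]; rfl
      have repv' : phi (n+1) v = cc n * ∫ w, G2 v w * phi n w ∂muI := by
        rw [(rep n v).1, KK_eq_int (continuous_phi n) (hIcc hv)]; rfl
      have key : 0 < (∫ w, G2 u w * phi (n+1) w ∂muI) * (∫ w, G2 v w * phi n w ∂muI)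
          - (∫ w, G2 u w * phi n w ∂muI) * (∫ w, G2 v w * phi (n+1) w ∂muI) := by
        apply pair_pos (α := u) (β := 1/2) (γ := 0) (δ := v)
        · exact int_G2_mul u _ (continuous_phi (n+1))
        · exact int_G2_mul u _ (continuous_phi n)
        · exact int_G2_mul v _ (continuous_phi (n+1))
        · exact int_G2_mul v _ (continuous_phi n)
        · intro w hw w' hw'
          have h2p : ∀ x ∈ Ioo (0:ℝ) (1/2), ∀ y ∈ Ioo (0:ℝ) (1/2), y ≤ x →
              0 ≤ phi (n+1) x * phi n y - phi (n+1) y * phi n x := by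
            intro x hx y hy hyx
            rcases eq_or_lt_of_le hyx with h | h
            · rw [h]; ring_nf; exact le_refl 0
            · linarith [ih2 y hy x hx h]
          rcases le_total w' w with hcmp | hcmp
          · apply mul_nonneg
            · linarith [G2_tp (hIcc hv) (hIcc hu) (hIcc hw) (hIcc hw') hvu.le hcmp]
            · exact h2p w hw w' hw' hcmp
          · have hA : G2 u w * G2 v w' - G2 u w' * G2 v w ≤ 0 := by
              linarith [G2_tp (hIcc hv) (hIcc hu) (hIcc hw') (hIcc hw) hvu.le hcmp]
            have hB : phi (n+1) w * phi n w' - phi (n+1) w' * phi n w ≤ 0 := by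
              linarith [h2p w' hw' w hw hcmp]
            nlinarith [mul_nonneg (neg_nonneg.mpr hA) (neg_nonneg.mpr hB)]
        · exact fun x hx => ⟨lt_trans hu.1 hx.1, hx.2⟩
        · exact fun x hx => ⟨hx.1, lt_trans hx.2 (lt_trans hvu hu.2)⟩
        · exact hu.2
        · exact hv.1
        · intro w hw w' hw'
          have hwII : w ∈ Ioo (0:ℝ) (1/2) := ⟨lt_trans hu.1 hw.1, hw.2⟩
          have hw'II : w' ∈ Ioo (0:ℝ) (1/2) := ⟨hw'.1, lt_trans hw'.2 (lt_trans hvu hu.2)⟩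
          apply mul_pos
          · linarith [G2_tp_strict hw'.1 hw'.2 hvu hw.1 hw.2]
          · linarith [ih2 w' hw'II w hwII (lt_trans (lt_trans hw'.2 hvu) hw.1)]
      have c1 := cc_pos n
      have c2 := cc_pos (n+1)
      rw [repu, repv, repu', repv']
      nlinarith [mul_pos (mul_pos c1 c2) key]

lemma wron_pos (n : ℕ) {t : ℝ} (ht : t ∈ Ioo (0:ℝ) (1/2)) :
    0 < phid (n+2) t * phi (n+1) t - phid (n+1) t * phi (n+2) t := by
  obtain ⟨_, ih2⟩ := Pn_all n
  have hIcc : ∀ {x : ℝ}, x ∈ Ioo (0:ℝ) (1/2) → x ∈ Icc (0:ℝ) (1/2) :=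
    fun hx => Ioo_subset_Icc_self hx
  have r1 : phid (n+2) t = cc (n+1) * ∫ w, g2 t w * phi (n+1) w ∂muI := by
    rw [(rep (n+1) t).2, KD_eq_int (continuous_phi (n+1)) (hIcc ht)]; rfl
  have r2 : phi (n+1) t = cc n * ∫ w, G2 t w * phi n w ∂muI := by
    rw [(rep n t).1, KK_eq_int (continuous_phi n) (hIcc ht)]; rfl
  have r3 : phid (n+1) t = cc n * ∫ w, g2 t w * phi n w ∂muI := by
    rw [(rep n t).2, KD_eq_int (continuous_phi n) (hIcc ht)]; rfl
  have r4 : phi (n+2) t = cc (n+1) * ∫ w, G2 t w * phi (n+1) w ∂muI := by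
    rw [(rep (n+1) t).1, KK_eq_int (continuous_phi (n+1)) (hIcc ht)]; rfl
  have key : 0 < (∫ w, g2 t w * phi (n+1) w ∂muI) * (∫ w, G2 t w * phi n w ∂muI)
      - (∫ w, g2 t w * phi n w ∂muI) * (∫ w, G2 t w * phi (n+1) w ∂muI) := by
    apply pair_pos (α := t) (β := 1/2) (γ := 0) (δ := t)
    · exact int_g2_mul t _ (continuous_phi (n+1))
    · exact int_g2_mul t _ (continuous_phi n)
    · exact int_G2_mul t _ (continuous_phi (n+1))
    · exact int_G2_mul t _ (continuous_phi n)
    · intro w hw w' hw'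
      have h2p : ∀ x ∈ Ioo (0:ℝ) (1/2), ∀ y ∈ Ioo (0:ℝ) (1/2), y ≤ x →
          0 ≤ phi (n+1) x * phi n y - phi (n+1) y * phi n x := by
        intro x hx y hy hyx
        rcases eq_or_lt_of_le hyx with h | h
        · rw [h]; ring_nf; exact le_refl 0
        · linarith [ih2 y hy x hx h]
      rcases le_total w' w with hcmp | hcmp
      · apply mul_nonneg
        · linarith [g2_tp ht hw hw' hcmp]
        · exact h2p w hw w' hw' hcmp
      · have hA : g2 t w * G2 t w' - g2 t w' * G2 t w ≤ 0 := by
          linarith [g2_tp ht hw' hw hcmp]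
        have hB : phi (n+1) w * phi n w' - phi (n+1) w' * phi n w ≤ 0 := by
          linarith [h2p w' hw' w hw hcmp]
        nlinarith [mul_nonneg (neg_nonneg.mpr hA) (neg_nonneg.mpr hB)]
    · exact fun x hx => ⟨lt_trans ht.1 hx.1, hx.2⟩
    · exact fun x hx => ⟨hx.1, lt_trans hx.2 ht.2⟩
    · exact ht.2
    · exact ht.1
    · intro w hw w' hw'
      have hwII : w ∈ Ioo (0:ℝ) (1/2) := ⟨lt_trans ht.1 hw.1, hw.2⟩
      have hw'II : w' ∈ Ioo (0:ℝ) (1/2) := ⟨hw'.1, lt_trans hw'.2 ht.2⟩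
      apply mul_pos
      · linarith [g2_tp_strict hw'.1 hw'.2 hw.1 hw.2]
      · linarith [ih2 w' hw'II w hwII (lt_trans hw'.2 hw.1)]
  have c1 := cc_pos n
  have c2 := cc_pos (n+1)
  rw [r1, r2, r3, r4]
  nlinarith [mul_pos (mul_pos c1 c2) key]


lemma phi_posP (n : ℕ) : ∀ t ∈ Ioo (0:ℝ) (1/2), 0 < phi n t := (Pn_all n).1

lemma f_eq_phi (m : ℕ) (t : ℝ) :
    (2*(m:ℝ)+1) * B (2*m) t / B (2*m+1) t = phid m t / phi m t := by
  rw [phid, phi, mul_assoc]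
  rw [mul_div_mul_left _ _ (pow_ne_zero _ (by norm_num : (-1:ℝ) ≠ 0))]

lemma step_lt {t : ℝ} (ht : t ∈ Ioo (0:ℝ) (1/2)) (n : ℕ) :
    (2*(n:ℝ)+1) * B (2*n) t / B (2*n+1) t
      < (2*((n:ℝ)+1)+1) * B (2*(n+1)) t / B (2*(n+1)+1) t := by
  obtain ⟨ht0, ht1⟩ := ht
  cases n with
  | zero =>
      have hb1 : t - 1/2 < 0 := by linarith
      have hb3 : 0 < B 3 t := by
        rw [B_three]
        nlinarith [mul_pos (mul_pos ht0 (by linarith : (0:ℝ) < 1 - t))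
          (by linarith : (0:ℝ) < 1/2 - t)]
      have key : (2*((0:ℕ):ℝ)+1) * B (2*0) t / B (2*0+1) t = 1 / (t - 1/2) := by
        norm_num [B_zero, B_one]
      have key2 : (2*(((0:ℕ):ℝ)+1)+1) * B (2*(0+1)) t / B (2*(0+1)+1) t
          = 3 * B 2 t / B 3 t := by
        norm_num
      rw [key, key2]
      have hne1 : t - 1/2 ≠ 0 := by linarith
      have hne2 : (1/2 - t : ℝ) ≠ 0 := by linarith
      have hdiff : 3 * B 2 t / B 3 t - 1 / (t - 1/2)
          = (2*(1/2 - t)^3) / (B 3 t * (1/2 - t)) := by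
        rw [div_sub_div _ _ (ne_of_gt hb3) hne1,
          div_eq_div_iff (mul_ne_zero (ne_of_gt hb3) hne1) (mul_ne_zero (ne_of_gt hb3) hne2),
          B_two, B_three]
        ring
      have hpos : 0 < (2*(1/2 - t)^3) / (B 3 t * (1/2 - t)) := by
        apply div_pos
        · have : 0 < 1/2 - t := by linarith
          positivity
        · exact mul_pos hb3 (by linarith)
      linarith [hdiff ▸ hpos]
  | succ m =>
      have h1 : (2*((m:ℝ)+1)+1) * B (2*(m+1)) t / B (2*(m+1)+1) t
          = phid (m+1) t / phi (m+1) t := by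
        have := f_eq_phi (m+1) t
        push_cast at this ⊢
        convert this using 3 <;> push_cast <;> ring_nf
      have h2 : (2*(((m:ℝ)+1)+1)+1) * B (2*((m+1)+1)) t / B (2*((m+1)+1)+1) t
          = phid (m+2) t / phi (m+2) t := by
        have := f_eq_phi (m+2) t
        push_cast at this ⊢
        convert this using 3 <;> push_cast <;> ring_nf
      push_cast
      push_cast at h1 h2
      rw [h1, h2]
      have hp1 : 0 < phi (m+1) t := phi_posP (m+1) t ⟨ht0, ht1⟩
      have hp2 : 0 < phi (m+2) t := phi_posP (m+2) t ⟨ht0, ht1⟩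
      rw [div_lt_div_iff₀ hp1 hp2]
      nlinarith [wron_pos m (show t ∈ Ioo (0:ℝ) (1/2) from ⟨ht0, ht1⟩)]
end Stmt4

theorem stmt4 (t : ℝ) :
    (t ∈ Ioo (0:ℝ) (1/2) → StrictMono (fun n : ℕ => (2*n+1 : ℝ) * B (2*n) t / B (2*n+1) t)) ∧
    (t ∈ Ioo (1/2:ℝ) 1 → StrictAnti (fun n : ℕ => (2*n+1 : ℝ) * B (2*n) t / B (2*n+1) t)) := by
  have hrefl : ∀ (s : ℝ) (m : ℕ),
      (2*(m:ℝ)+1) * B (2*m) (1 - s) / B (2*m+1) (1 - s)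
        = -((2*(m:ℝ)+1) * B (2*m) s / B (2*m+1) s) := by
    intro s m
    rw [Stmt4.B_reflect (2*m) s, Stmt4.B_reflect (2*m+1) s,
      Even.neg_one_pow ⟨m, by ring⟩, Odd.neg_one_pow ⟨m, rfl⟩, one_mul, neg_one_mul,
      div_neg]
  constructor
  · intro ht
    apply strictMono_nat_of_lt_succ
    intro n
    have h := Stmt4.step_lt ht n
    push_cast
    push_cast at h
    convert h using 2 <;> push_cast <;> ring_nf
  · intro ht
    apply strictAnti_nat_of_succ_lt
    intro n
    have hs : (1 - t) ∈ Ioo (0:ℝ) (1/2) := by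
      obtain ⟨h1, h2⟩ := ht
      constructor <;> simp <;> linarith
    have h := Stmt4.step_lt hs n
    have e1 := hrefl (1 - t) n
    have e2 := hrefl (1 - t) (n+1)
    rw [show (1 - (1 - t)) = t by ring] at e1 e2
    push_cast at e1 e2
    have goal1 : (2*((n:ℝ)+1)+1) * B (2*(n+1)) t / B (2*(n+1)+1) t
        < (2*(n:ℝ)+1) * B (2*n) t / B (2*n+1) t := by
      rw [e1, e2]
      linarith [h]
    push_cast
    push_cast at goal1
    convert goal1 using 2 <;> push_cast <;> ring_nf
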